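/- For all real n > 3/2 and all x ≥ 0: (x + sqrt(4n - 6 + x²))/(2n - 1) < U(n,-x)/U(n-1,-x) < (x + sqrt(4n - 2 + x²))/(2n - 1). The upper bound also holds for n ∈ (1/2, 3/2). -/

import Mathlib

open Filter

/-- The parabolic cylinder function `U(a,x)` (DLMF §12), characterized as a
family `U` (with `x`-derivative `U'`) of solutions of `y'' = (x²/4 + a) y`
that is recessive as `x → +∞`, positive for `a > -1/2`, and satisfies the
recurrence `U(a-1,x) = x U(a,x) + (a + 1/2) U(a+1,x)`. -/
structure IsParabolicCylinderU (U U' : ℝ → ℝ → ℝ) : Prop where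
  hasDeriv : ∀ a x : ℝ, HasDerivAt (U a) (U' a x) x
  ode : ∀ a x : ℝ, HasDerivAt (U' a) ((x ^ 2 / 4 + a) * U a x) x
  recessive : ∀ a : ℝ, Tendsto (U a) atTop (nhds 0)
  pos : ∀ a x : ℝ, -1/2 < a → 0 < U a x
  recurrence : ∀ a x : ℝ, U (a - 1) x = x * U a x + (a + 1/2) * U (a + 1) x

open Set Real Topology

/-- Barrier lemma: if at every zero of `h` the derivative is positive, then once
`h` is nonnegative it stays positive forever after. -/
lemma barrier_pos {h H : ℝ → ℝ} (hd : ∀ y, HasDerivAt h (H y) y)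
    (hc : ∀ y, h y = 0 → 0 < H y) :
    ∀ y₀ Y : ℝ, y₀ < Y → 0 ≤ h y₀ → 0 < h Y := by
  have cont : Continuous h := by
    rw [continuous_iff_continuousAt]; exact fun y => (hd y).continuousAt
  have key : ∀ y₁ Y : ℝ, y₁ < Y → 0 < h y₁ → 0 < h Y := by
    intro y₁ Y hlt hpos
    by_contra hY
    push_neg at hY
    set S : Set ℝ := Icc y₁ Y ∩ h ⁻¹' (Iic 0) with hSdef
    have hSclosed : IsClosed S := isClosed_Icc.inter (isClosed_Iic.preimage cont)
    have hSne : S.Nonempty := ⟨Y, ⟨le_of_lt hlt, le_refl Y⟩, hY⟩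
    have hSbdd : BddBelow S := ⟨y₁, fun z hz => hz.1.1⟩
    have hsS : sInf S ∈ S := hSclosed.csInf_mem hSne hSbdd
    set s := sInf S with hs
    have hy₁s : y₁ < s := by
      rcases lt_or_eq_of_le hsS.1.1 with heq | heq
      · exact heq
      · exfalso; rw [← heq] at hsS; exact absurd hsS.2 (not_le.mpr hpos)
    have hbefore : ∀ y, y₁ ≤ y → y < s → 0 < h y := by
      intro y hy1 hys
      by_contra hy
      push_neg at hy
      have : y ∈ S := ⟨⟨hy1, le_trans (le_of_lt hys) hsS.1.2⟩, hy⟩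
      exact absurd (csInf_le hSbdd this) (not_le.mpr hys)
    have hs0 : h s = 0 := by
      have hs2 : h s ≤ 0 := hsS.2
      rcases lt_or_eq_of_le hs2 with h2 | h2
      · exfalso
        have hiv : (0:ℝ) ∈ Ioo (h s) (h y₁) := ⟨h2, hpos⟩
        obtain ⟨z, hz, hz0⟩ := intermediate_value_Ioo' (le_of_lt hy₁s)
          cont.continuousOn hiv
        have : z ∈ S := ⟨⟨le_of_lt hz.1, le_trans (le_of_lt hz.2) hsS.1.2⟩, le_of_eq hz0⟩
        exact absurd (csInf_le hSbdd this) (not_le.mpr hz.2)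
      · exact h2
    have hHs : 0 < H s := hc s hs0
    have hslope : Tendsto (slope h s) (𝓝[≠] s) (𝓝 (H s)) :=
      hasDerivAt_iff_tendsto_slope.mp (hd s)
    have hslope' : ∀ᶠ z in 𝓝[<] s, 0 < slope h s z :=
      (hslope.eventually_const_lt hHs).filter_mono
        (nhdsWithin_mono s (fun z hz => ne_of_lt hz))
    have hmem : Ioo y₁ s ∈ 𝓝[<] s := Ioo_mem_nhdsLT_of_mem ⟨hy₁s, le_refl s⟩
    obtain ⟨z, hz1, hz2⟩ := (hslope'.and (eventually_of_mem hmem fun z hz => hz)).exists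
    have hzneg : h z < 0 := by
      have heq : slope h s z = h z / (z - s) := by
        rw [slope_def_field, hs0]; ring
      rw [heq] at hz1
      rcases div_pos_iff.mp hz1 with ⟨_, h2⟩ | ⟨h1, _⟩
      · linarith [hz2.2]
      · exact h1
    exact absurd (hbefore z (le_of_lt hz2.1) hz2.2) (not_lt.mpr (le_of_lt hzneg))
  intro y₀ Y hlt h0
  rcases lt_or_eq_of_le h0 with hpos0 | hpos0
  · exact key y₀ Y hlt hpos0
  · -- h y₀ = 0, use positive derivative to move right
    have hHs : 0 < H y₀ := hc y₀ hpos0.symm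
    have hslope : Tendsto (slope h y₀) (𝓝[≠] y₀) (𝓝 (H y₀)) :=
      hasDerivAt_iff_tendsto_slope.mp (hd y₀)
    have hslope' : ∀ᶠ z in 𝓝[>] y₀, 0 < slope h y₀ z :=
      (hslope.eventually_const_lt hHs).filter_mono
        (nhdsWithin_mono y₀ (fun z hz => ne_of_gt hz))
    have hmem : Ioo y₀ Y ∈ 𝓝[>] y₀ := Ioo_mem_nhdsGT_of_mem ⟨le_refl y₀, hlt⟩
    obtain ⟨z, hz1, hz2⟩ := (hslope'.and (eventually_of_mem hmem fun z hz => hz)).exists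
    have hzpos : 0 < h z := by
      have hsl : slope h y₀ z = h z / (z - y₀) := by
        rw [slope_def_field, ← hpos0]; ring
      rw [hsl] at hz1
      rcases div_pos_iff.mp hz1 with ⟨h1, _⟩ | ⟨_, h2⟩
      · exact h1
      · linarith [hz2.1]
    rcases eq_or_lt_of_le (le_of_lt hz2.2 : z ≤ Y) with hzY | hzY
    · rwa [← hzY]
    · exact key z Y hzY hzpos


/-- Two solutions of `y'' = q y` that both tend to `0` (together with their
derivatives) at `+∞` have vanishing Wronskian. -/
lemma wronskian_zero {f fd g gd q : ℝ → ℝ}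
    (hf : ∀ x, HasDerivAt f (fd x) x) (hfd : ∀ x, HasDerivAt fd (q x * f x) x)
    (hg : ∀ x, HasDerivAt g (gd x) x) (hgd : ∀ x, HasDerivAt gd (q x * g x) x)
    (hf0 : Tendsto f atTop (nhds 0)) (hfd0 : Tendsto fd atTop (nhds 0))
    (hg0 : Tendsto g atTop (nhds 0)) (hgd0 : Tendsto gd atTop (nhds 0)) :
    ∀ x, f x * gd x - fd x * g x = 0 := by
  set w : ℝ → ℝ := fun x => f x * gd x - fd x * g x with hw
  have hwd : ∀ x, HasDerivAt w 0 x := by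
    intro x
    have h1 := ((hf x).mul (hgd x)).sub ((hfd x).mul (hg x))
    refine h1.congr_deriv ?_
    ring
  have hconst : ∀ x y, w x = w y := fun x y =>
    is_const_of_deriv_eq_zero (fun z => (hwd z).differentiableAt)
      (fun z => (hwd z).deriv) x y
  have h0 : Tendsto w atTop (nhds 0) := by
    have := (hf0.mul hgd0).sub (hfd0.mul hg0)
    simpa using this
  intro x
  have h1 : Tendsto w atTop (nhds (w x)) := by
    have heq : w = fun _ => w x := funext fun y => hconst y x
    rw [heq]
    exact tendsto_const_nhds
  exact tendsto_nhds_unique h1 h0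


namespace PCFAux

variable {U U' : ℝ → ℝ → ℝ}

lemma contU (hU : IsParabolicCylinderU U U') (a : ℝ) : Continuous (U a) :=
  continuous_iff_continuousAt.2 fun x => (hU.hasDeriv a x).continuousAt

lemma contU' (hU : IsParabolicCylinderU U U') (a : ℝ) : Continuous (U' a) :=
  continuous_iff_continuousAt.2 fun x => (hU.ode a x).continuousAt

lemma qpos (a y : ℝ) (hy : |a| + 2 ≤ y) : 0 < y ^ 2 / 4 + a := by
  have h1 : 0 ≤ |a| := abs_nonneg a
  have h2 : -|a| ≤ a := neg_abs_le a
  nlinarith [sq_nonneg (|a| + 2), sq_nonneg y]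

lemma U'mono (hU : IsParabolicCylinderU U U') {a : ℝ} (ha : -1/2 < a) {X : ℝ}
    (hX : |a| + 2 ≤ X) : MonotoneOn (U' a) (Ici X) := by
  apply monotoneOn_of_deriv_nonneg (convex_Ici X) (contU' hU a).continuousOn
  · intro y _
    exact (hU.ode a y).differentiableAt.differentiableWithinAt
  · intro y hy
    rw [interior_Ici] at hy
    rw [(hU.ode a y).deriv]
    have hyX : X ≤ y := le_of_lt hy
    have : 0 < y ^ 2 / 4 + a := qpos a y (le_trans hX hyX)
    exact le_of_lt (mul_pos this (hU.pos a y ha))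

lemma U'neg (hU : IsParabolicCylinderU U U') {a : ℝ} (ha : -1/2 < a) :
    ∀ x, |a| + 2 ≤ x → U' a x < 0 := by
  intro x hx
  by_contra hcon
  push_neg at hcon
  -- U' a nonneg on [x, ∞), so U a is monotone there
  have hX : (0:ℝ) ≤ |a| + 2 := by positivity
  have hU'nn : ∀ y ∈ Ici x, 0 ≤ U' a y := by
    intro y hy
    exact le_trans hcon (U'mono hU ha hx (self_mem_Ici) hy hy)
  have hmono : MonotoneOn (U a) (Ici x) := by
    apply monotoneOn_of_deriv_nonneg (convex_Ici x) (contU hU a).continuousOn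
    · intro y _
      exact (hU.hasDeriv a y).differentiableAt.differentiableWithinAt
    · intro y hy
      rw [interior_Ici] at hy
      rw [(hU.hasDeriv a y).deriv]
      exact hU'nn y (Set.mem_Ici.mpr (le_of_lt hy))
  have hpos : 0 < U a x := hU.pos a x ha
  obtain ⟨y, hy1, hy2⟩ := (((hU.recessive a).eventually_lt_const hpos).and
    (eventually_ge_atTop x)).exists
  have : U a x ≤ U a y := hmono self_mem_Ici hy2 hy2
  linarith

lemma U'tendsto (hU : IsParabolicCylinderU U U') {a : ℝ} (ha : -1/2 < a) :
    Tendsto (U' a) atTop (nhds 0) := by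
  rw [Metric.tendsto_atTop]
  intro ε hε
  set X := |a| + 2 with hXdef
  -- find a point where U' a > -ε
  have hex : ∃ x₁, X ≤ x₁ ∧ -ε < U' a x₁ := by
    by_contra hcon
    push_neg at hcon
    have hq : 0 ≤ U a X / ε := div_nonneg (le_of_lt (hU.pos a X ha)) (le_of_lt hε)
    set y : ℝ := X + U a X / ε + 1 with hydef
    have hXy : X < y := by rw [hydef]; linarith
    obtain ⟨c, hc, hceq⟩ := exists_hasDerivAt_eq_slope (U a) (U' a) hXy
      (contU hU a).continuousOn (fun z _ => hU.hasDeriv a z)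
    have hcle : U' a c ≤ -ε := hcon c (le_of_lt hc.1)
    have h1 : U a y - U a X = U' a c * (y - X) := by
      rw [hceq, div_mul_cancel₀]
      intro hzero
      have : y = X := by linarith
      linarith
    have h2 : U a y - U a X ≤ -ε * (y - X) := by
      rw [h1]
      apply mul_le_mul_of_nonneg_right hcle
      linarith
    have h3 : -ε * (y - X) = -(U a X) - ε := by
      rw [hydef]; field_simp; ring
    have := hU.pos a y ha
    have := hU.pos a X ha
    linarith
  obtain ⟨x₁, hx₁X, hx₁⟩ := hex
  refine ⟨x₁, fun y hy => ?_⟩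
  have h1 : U' a x₁ ≤ U' a y := U'mono hU ha le_rfl
    (by exact hx₁X) (le_trans hx₁X hy) hy
  have h2 : U' a y < 0 := U'neg hU ha y (le_trans hx₁X hy)
  rw [Real.dist_eq, sub_zero, abs_lt]
  constructor <;> linarith

lemma exp_neg_tendsto {c : ℝ} (hc : 0 < c) :
    Tendsto (fun z : ℝ => Real.exp (-(c * z))) atTop (nhds 0) := by
  apply Real.tendsto_exp_atBot.comp
  have h1 : Tendsto (fun z : ℝ => c * z) atTop atTop :=
    Tendsto.const_mul_atTop hc tendsto_id
  exact tendsto_neg_atTop_atBot.comp h1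

lemma decay (hU : IsParabolicCylinderU U U') {a : ℝ} (ha : -1/2 < a) {c : ℝ} (hc : 0 < c) :
    ∃ X K : ℝ, 0 ≤ X ∧ ∀ x, X ≤ x → U a x ≤ K * Real.exp (-(c * x)) := by
  set X := 2 * c + |a| + 2 with hXdef
  have hXabs : |a| + 2 ≤ X := by rw [hXdef]; linarith
  have hX0 : (0:ℝ) ≤ X := by positivity
  have hqc : ∀ y, X ≤ y → c ^ 2 ≤ y ^ 2 / 4 + a := by
    intro y hy
    have h2 : -|a| ≤ a := neg_abs_le a
    have h3 : 0 ≤ |a| := abs_nonneg a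
    nlinarith [sq_nonneg (2 * c + |a| + 2)]
  have hφ0 : Tendsto (fun y => U' a y + c * U a y) atTop (nhds 0) := by
    have := (U'tendsto hU ha).add ((hU.recessive a).const_mul c)
    simpa using this
  have hφle : ∀ y, X ≤ y → U' a y + c * U a y ≤ 0 := by
    intro y hy
    by_contra hcon
    push_neg at hcon
    set ψ : ℝ → ℝ := fun z => (U' a z + c * U a z) * Real.exp (-(c * z)) with hψdef
    have hψd : ∀ z, HasDerivAt ψ
        ((z ^ 2 / 4 + a - c ^ 2) * U a z * Real.exp (-(c * z))) z := by
      intro z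
      have h1 : HasDerivAt (fun z => U' a z + c * U a z)
          ((z ^ 2 / 4 + a) * U a z + c * U' a z) z :=
        (hU.ode a z).add ((hU.hasDeriv a z).const_mul c)
      have h3 : HasDerivAt (fun z : ℝ => -(c * z)) (-c) z := by
        exact ((hasDerivAt_id z).const_mul c).neg.congr_deriv (by simp)
      have h2 : HasDerivAt (fun z => Real.exp (-(c * z))) (-c * Real.exp (-(c * z))) z := by
        simpa [mul_comm] using h3.exp
      have := h1.mul h2
      refine this.congr_deriv ?_
      ring
    have hψmono : MonotoneOn ψ (Ici y) := by
      apply monotoneOn_of_deriv_nonneg (convex_Ici y)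
      · exact Continuous.continuousOn
          (((contU' hU a).add (continuous_const.mul (contU hU a))).mul
            (Real.continuous_exp.comp (continuous_const.mul continuous_id).neg))
      · intro z _
        exact (hψd z).differentiableAt.differentiableWithinAt
      · intro z hz
        rw [interior_Ici] at hz
        rw [(hψd z).deriv]
        have hq : c ^ 2 ≤ z ^ 2 / 4 + a := hqc z (le_trans hy (le_of_lt hz))
        apply mul_nonneg (mul_nonneg (by linarith) (le_of_lt (hU.pos a z ha)))
          (le_of_lt (Real.exp_pos _))
    have hψ0 : Tendsto ψ atTop (nhds 0) := by
      have := hφ0.mul (exp_neg_tendsto hc)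
      simpa using this
    have hψy : 0 < ψ y := mul_pos hcon (Real.exp_pos _)
    obtain ⟨z, hz1, hz2⟩ := ((hψ0.eventually_lt_const hψy).and (eventually_ge_atTop y)).exists
    have : ψ y ≤ ψ z := hψmono self_mem_Ici hz2 hz2
    linarith
  -- U a x * exp (c x) is antitone on [X, ∞)
  refine ⟨X, U a X * Real.exp (c * X), hX0, fun x hx => ?_⟩
  set g : ℝ → ℝ := fun z => U a z * Real.exp (c * z) with hgdef
  have hgd : ∀ z, HasDerivAt g ((U' a z + c * U a z) * Real.exp (c * z)) z := by
    intro z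
    have h2 : HasDerivAt (fun z : ℝ => Real.exp (c * z)) (c * Real.exp (c * z)) z := by
      have h3 : HasDerivAt (fun z : ℝ => c * z) c z := by
        simpa using (hasDerivAt_id z).const_mul c
      simpa [mul_comm] using h3.exp
    have := (hU.hasDeriv a z).mul h2
    refine this.congr_deriv ?_
    ring
  have hganti : AntitoneOn g (Ici X) := by
    apply antitoneOn_of_deriv_nonpos (convex_Ici X)
    · exact Continuous.continuousOn
        ((contU hU a).mul (Real.continuous_exp.comp (continuous_const.mul continuous_id)))
    · intro z _
      exact (hgd z).differentiableAt.differentiableWithinAt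
    · intro z hz
      rw [interior_Ici] at hz
      rw [(hgd z).deriv]
      have := hφle z (le_of_lt hz)
      have := Real.exp_pos (c * z)
      nlinarith
  have hgle : g x ≤ g X := hganti self_mem_Ici hx hx
  have := mul_le_mul_of_nonneg_right hgle (le_of_lt (Real.exp_pos (-(c * x))))
  calc U a x = U a x * Real.exp (c * x) * Real.exp (-(c * x)) := by
        rw [mul_assoc, ← Real.exp_add]; simp
    _ ≤ U a X * Real.exp (c * X) * Real.exp (-(c * x)) := this

lemma powU (hU : IsParabolicCylinderU U U') {a : ℝ} (ha : -1/2 < a) (k : ℕ) :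
    Tendsto (fun x => x ^ k * U a x) atTop (nhds 0) := by
  obtain ⟨X, K, hX0, hdec⟩ := decay hU ha (c := 1) one_pos
  have hub : Tendsto (fun x => K * (x ^ k * Real.exp (-x))) atTop (nhds 0) := by
    have := (tendsto_pow_mul_exp_neg_atTop_nhds_zero k).const_mul K
    simpa using this
  apply tendsto_of_tendsto_of_tendsto_of_le_of_le' tendsto_const_nhds hub
  · filter_upwards [eventually_ge_atTop (0:ℝ)] with x hx
    exact mul_nonneg (pow_nonneg hx k) (le_of_lt (hU.pos a x ha))
  · filter_upwards [eventually_ge_atTop X, eventually_ge_atTop (0:ℝ)] with x hx hx0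
    have h1 := hdec x hx
    have h2 : x ^ k * U a x ≤ x ^ k * (K * Real.exp (-(1 * x))) :=
      mul_le_mul_of_nonneg_left h1 (pow_nonneg hx0 k)
    calc x ^ k * U a x ≤ x ^ k * (K * Real.exp (-(1 * x))) := h2
      _ = K * (x ^ k * Real.exp (-x)) := by rw [one_mul]; ring

lemma xU' (hU : IsParabolicCylinderU U U') {a : ℝ} (ha : -1/2 < a) :
    Tendsto (fun x => x * U' a x) atTop (nhds 0) := by
  set X := |a| + 2 with hXdef
  have hX0 : (0:ℝ) < X := by positivity
  have hlb : Tendsto (fun x : ℝ => -2 * U a (x / 2)) atTop (nhds 0) := by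
    have h1 : Tendsto (fun x : ℝ => x / 2) atTop atTop := by
      apply Tendsto.atTop_div_const two_pos tendsto_id
    have := ((hU.recessive a).comp h1).const_mul (-2)
    simpa using this
  apply tendsto_of_tendsto_of_tendsto_of_le_of_le' hlb tendsto_const_nhds
  · filter_upwards [eventually_ge_atTop (2 * X)] with x hx
    -- MVT on [x/2, x]
    have hxpos : 0 < x := by linarith
    have hhalf : X ≤ x / 2 := by linarith
    have hlt : x / 2 < x := by linarith
    obtain ⟨c, hc, hceq⟩ := exists_hasDerivAt_eq_slope (U a) (U' a) hlt
      (contU hU a).continuousOn (fun z _ => hU.hasDeriv a z)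
    have hcmono : U' a c ≤ U' a x := U'mono hU ha le_rfl
      (le_trans hhalf (le_of_lt hc.1)) (le_trans hhalf (le_of_lt hlt))
      (le_of_lt hc.2)
    have hslope : U' a c = (U a x - U a (x / 2)) / (x - x / 2) := hceq
    have hP1 : 0 < U a x := hU.pos a x ha
    have hP2 : 0 < U a (x / 2) := hU.pos a (x / 2) ha
    have hden : 0 < x - x / 2 := by linarith
    have hkey : U' a c * (x - x / 2) = U a x - U a (x / 2) := by
      rw [hceq, div_mul_cancel₀ _ (ne_of_gt hden)]
    have hmul : x * U' a c ≤ x * U' a x := mul_le_mul_of_nonneg_left hcmono (le_of_lt hxpos)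
    nlinarith [hkey, hmul, hP1]
  · filter_upwards [eventually_ge_atTop (2 * X)] with x hx
    have hxpos : 0 < x := by linarith
    have hneg : U' a x < 0 := U'neg hU ha x (by linarith)
    nlinarith



noncomputable def Zf (U U' : ℝ → ℝ → ℝ) (a x : ℝ) : ℝ :=
  U' a x + x / 2 * U a x + (a + 1/2) * U (a + 1) x

noncomputable def Z1 (U U' : ℝ → ℝ → ℝ) (a x : ℝ) : ℝ :=
  (x ^ 2 / 4 + a + 1/2) * U a x + x / 2 * U' a x + (a + 1/2) * U' (a + 1) x

lemma Zf_hasDeriv (hU : IsParabolicCylinderU U U') (a x : ℝ) :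
    HasDerivAt (Zf U U' a) (Z1 U U' a x) x := by
  have hfn : Zf U U' a = fun y => U' a y + y / 2 * U a y + (a + 1/2) * U (a + 1) y := rfl
  rw [hfn]
  have h2 := ((hasDerivAt_id x).div_const 2).mul (hU.hasDeriv a x)
  have h3 := (hU.hasDeriv (a + 1) x).const_mul (a + 1/2)
  have H := ((hU.ode a x).add h2).add h3
  refine H.congr_deriv ?_
  unfold Z1
  simp only [id_eq]
  ring

lemma Z1_hasDeriv (hU : IsParabolicCylinderU U U') (a x : ℝ) :
    HasDerivAt (Z1 U U' a) ((x ^ 2 / 4 + (a + 1)) * Zf U U' a x) x := by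
  have hfn : Z1 U U' a
      = fun y => (y ^ 2 / 4 + a + 1/2) * U a y + y / 2 * U' a y + (a + 1/2) * U' (a + 1) y := rfl
  rw [hfn]
  have hp : HasDerivAt (fun y : ℝ => y ^ 2 / 4 + a + 1/2) (x / 2) x := by
    have := (((hasDerivAt_pow 2 x).div_const 4).add_const a).add_const (1/2 : ℝ)
    refine this.congr_deriv ?_
    simp
    ring
  have h1 := hp.mul (hU.hasDeriv a x)
  have h2 := ((hasDerivAt_id x).div_const 2).mul (hU.ode a x)
  have h3 := (hU.ode (a + 1) x).const_mul (a + 1/2)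
  have H := (h1.add h2).add h3
  refine H.congr_deriv ?_
  unfold Zf
  simp only [id_eq]
  ring

lemma Zf_tendsto (hU : IsParabolicCylinderU U U') {a : ℝ} (ha : -1/2 < a) :
    Tendsto (Zf U U' a) atTop (nhds 0) := by
  have hfn : Zf U U' a = fun x => U' a x + x / 2 * U a x + (a + 1/2) * U (a + 1) x := rfl
  rw [hfn]
  have h1 := U'tendsto hU ha
  have h2 : Tendsto (fun x => x / 2 * U a x) atTop (nhds 0) := by
    have h := (powU hU ha 1).const_mul (1/2 : ℝ)
    rw [mul_zero] at h
    exact h.congr (fun x => by ring)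
  have h3 : Tendsto (fun x => (a + 1/2) * U (a + 1) x) atTop (nhds 0) := by
    have h := (hU.recessive (a + 1)).const_mul (a + 1/2)
    rwa [mul_zero] at h
  have H := (h1.add h2).add h3
  simp only [add_zero] at H
  exact H

lemma Z1_tendsto (hU : IsParabolicCylinderU U U') {a : ℝ} (ha : -1/2 < a) :
    Tendsto (Z1 U U' a) atTop (nhds 0) := by
  have hfn : Z1 U U' a
      = fun x => (x ^ 2 / 4 + a + 1/2) * U a x + x / 2 * U' a x + (a + 1/2) * U' (a + 1) x := rfl
  rw [hfn]
  have h1 : Tendsto (fun x => (x ^ 2 / 4 + a + 1/2) * U a x) atTop (nhds 0) := by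
    have ha1 := (powU hU ha 2).const_mul (1/4 : ℝ)
    have ha2 := (hU.recessive a).const_mul (a + 1/2)
    have h := ha1.add ha2
    simp only [mul_zero, add_zero] at h
    exact h.congr (fun x => by ring)
  have h2 : Tendsto (fun x => x / 2 * U' a x) atTop (nhds 0) := by
    have h := (xU' hU ha).const_mul (1/2 : ℝ)
    rw [mul_zero] at h
    exact h.congr (fun x => by ring)
  have h3 : Tendsto (fun x => (a + 1/2) * U' (a + 1) x) atTop (nhds 0) := by
    have h := (U'tendsto hU (by linarith : (-1/2 : ℝ) < a + 1)).const_mul (a + 1/2)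
    rwa [mul_zero] at h
  have H := (h1.add h2).add h3
  simp only [add_zero] at H
  exact H

lemma Zf_prop (hU : IsParabolicCylinderU U U') {a : ℝ} (ha : -1/2 < a) :
    ∀ x, Zf U U' a x = (Zf U U' a 0 / U (a + 1) 0) * U (a + 1) x := by
  have ha1 : (-1/2 : ℝ) < a + 1 := by linarith
  have hW : ∀ x, Zf U U' a x * U' (a + 1) x - Z1 U U' a x * U (a + 1) x = 0 :=
    wronskian_zero (Zf_hasDeriv hU a) (Z1_hasDeriv hU a) (hU.hasDeriv (a + 1))
      (hU.ode (a + 1)) (Zf_tendsto hU ha) (Z1_tendsto hU ha)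
      (hU.recessive (a + 1)) (U'tendsto hU ha1)
  have hratio : ∀ x, HasDerivAt (fun x => Zf U U' a x / U (a + 1) x) 0 x := by
    intro x
    have hne : U (a + 1) x ≠ 0 := ne_of_gt (hU.pos (a + 1) x ha1)
    have := (Zf_hasDeriv hU a x).div (hU.hasDeriv (a + 1) x) hne
    refine this.congr_deriv ?_
    have h0 : Z1 U U' a x * U (a + 1) x - Zf U U' a x * U' (a + 1) x = 0 := by
      have := hW x; linarith
    rw [h0, zero_div]
  intro x
  have hne : U (a + 1) x ≠ 0 := ne_of_gt (hU.pos (a + 1) x ha1)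
  have hne0 : U (a + 1) 0 ≠ 0 := ne_of_gt (hU.pos (a + 1) 0 ha1)
  have hconst : Zf U U' a x / U (a + 1) x = Zf U U' a 0 / U (a + 1) 0 :=
    is_const_of_deriv_eq_zero (fun z => (hratio z).differentiableAt)
      (fun z => (hratio z).deriv) x 0
  rw [div_eq_div_iff hne hne0] at hconst
  rw [div_mul_eq_mul_div, eq_div_iff hne0]
  linear_combination hconst

lemma rel_ii (hU : IsParabolicCylinderU U U') (a x : ℝ) :
    Z1 U U' a x - x / 2 * Zf U U' a x = (a + 1/2) * Zf U U' (a + 1) x := by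
  have hrec := hU.recurrence (a + 1) x
  rw [show a + 1 - 1 = a by ring] at hrec
  unfold Zf Z1
  linear_combination (a + 1/2) * hrec

lemma Zf_zero (hU : IsParabolicCylinderU U U') {a : ℝ} (ha : -1/2 < a) :
    ∀ x, Zf U U' a x = 0 := by
  have ha1 : (-1/2 : ℝ) < a + 1 := by linarith
  have ha2 : (-1/2 : ℝ) < a + 2 := by linarith
  obtain ⟨la, p1⟩ : ∃ l, ∀ x, Zf U U' a x = l * U (a + 1) x := ⟨_, Zf_prop hU ha⟩
  obtain ⟨la1, p2⟩ : ∃ l, ∀ x, Zf U U' (a + 1) x = l * U (a + 2) x := by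
    have h := Zf_prop hU ha1
    rw [show a + 1 + 1 = a + 2 by ring] at h
    exact ⟨_, h⟩
  have hder : ∀ x, Z1 U U' a x = la * U' (a + 1) x := by
    intro x
    have h1 : HasDerivAt (Zf U U' a) (Z1 U U' a x) x := Zf_hasDeriv hU a x
    have heq : Zf U U' a = fun x => la * U (a + 1) x := funext p1
    rw [heq] at h1
    have h2 : HasDerivAt (fun x => la * U (a + 1) x) (la * U' (a + 1) x) x :=
      (hU.hasDeriv (a + 1) x).const_mul la
    exact h1.unique h2
  have key : ∀ x, (la * (la1 - (a + 3/2)) - (a + 1/2) * la1) * U (a + 2) x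
      = la * x * U (a + 1) x := by
    intro x
    have hii := rel_ii hU a x
    rw [hder x, p1 x, p2 x] at hii
    have hzdef : Zf U U' (a + 1) x
        = U' (a + 1) x + x / 2 * U (a + 1) x + (a + 3/2) * U (a + 2) x := by
      unfold Zf
      rw [show a + 1 + 1 = a + 2 by ring]
      ring
    have hU' : U' (a + 1) x
        = la1 * U (a + 2) x - x / 2 * U (a + 1) x - (a + 3/2) * U (a + 2) x := by
      linear_combination p2 x - hzdef
    rw [hU'] at hii
    linear_combination hii
  have hB : la * (la1 - (a + 3/2)) - (a + 1/2) * la1 = 0 := by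
    have h0 := key 0
    simp only [mul_zero, zero_mul] at h0
    rcases mul_eq_zero.mp h0 with h | h
    · exact h
    · exact absurd h (ne_of_gt (hU.pos (a + 2) 0 ha2))
  have hla : la = 0 := by
    have h1 := key 1
    rw [hB, zero_mul] at h1
    have h2 : la * U (a + 1) 1 = 0 := by linarith [h1]
    rcases mul_eq_zero.mp h2 with h | h
    · exact h
    · exact absurd h (ne_of_gt (hU.pos (a + 1) 1 ha1))
  intro x
  rw [p1 x, hla, zero_mul]

lemma dform1 (hU : IsParabolicCylinderU U U') {a : ℝ} (ha : -1/2 < a) (x : ℝ) :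
    U' a x = -(x / 2) * U a x - (a + 1/2) * U (a + 1) x := by
  have h := Zf_zero hU ha x
  unfold Zf at h
  linarith

lemma dform2 (hU : IsParabolicCylinderU U U') {a : ℝ} (ha : -1/2 < a) (x : ℝ) :
    U' a x = x / 2 * U a x - U (a - 1) x := by
  have h1 := dform1 hU ha x
  have hrec := hU.recurrence a x
  linear_combination h1 + hrec


set_option maxHeartbeats 2000000 in
/-- The key upper bound: for `n > 1/2` and `x ≥ 0`,
`U(n,-x)/U(n-1,-x) < (x + √(4n-2+x²))/(2n-1)`. -/
lemma upper (hU : IsParabolicCylinderU U U') {n : ℝ} (hn : 1/2 < n) (x : ℝ) (hx : 0 ≤ x) :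
    U n (-x) / U (n - 1) (-x) < (x + Real.sqrt (4 * n - 2 + x ^ 2)) / (2 * n - 1) := by
  have hn2 : (-1/2 : ℝ) < n := by linarith
  -- the comparison function φ
  set φ : ℝ → ℝ := fun y => Real.sqrt (y ^ 2 / 4 + (n - 1/2)) with hφdef
  have hargpos : ∀ y : ℝ, 0 < y ^ 2 / 4 + (n - 1/2) := by
    intro y; nlinarith [sq_nonneg y]
  have hφpos : ∀ y, 0 < φ y := fun y => Real.sqrt_pos.mpr (hargpos y)
  have hφsq : ∀ y, φ y ^ 2 = y ^ 2 / 4 + (n - 1/2) := fun y =>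
    Real.sq_sqrt (le_of_lt (hargpos y))
  have hφd : ∀ y, HasDerivAt φ (y / (4 * φ y)) y := by
    intro y
    have hin : HasDerivAt (fun y : ℝ => y ^ 2 / 4 + (n - 1/2)) (y / 2) y := by
      have := ((hasDerivAt_pow 2 y).div_const 4).add_const (n - 1/2)
      refine this.congr_deriv ?_
      simp
      ring
    have := hin.sqrt (ne_of_gt (hargpos y))
    convert this using 1
    rw [div_div]
    congr 1
    ring
  have hφhalf : ∀ y, 0 ≤ y → y / 2 ≤ φ y := by
    intro y hy
    rw [hφdef]
    rw [Real.le_sqrt (by positivity) (le_of_lt (hargpos y))]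
    nlinarith
  clear_value φ
  -- h and its derivative H
  set h : ℝ → ℝ := fun y => U' n y + φ y * U n y with hhdef
  set H : ℝ → ℝ := fun y =>
    (y ^ 2 / 4 + n) * U n y + y / (4 * φ y) * U n y + φ y * U' n y with hHdef
  have hhd : ∀ y, HasDerivAt h (H y) y := by
    intro y
    have := (hU.ode n y).add ((hφd y).mul (hU.hasDeriv n y))
    refine this.congr_deriv ?_
    simp only [hHdef]
    ring
  clear_value h H
  -- at any zero of h, H is positive
  have hcross : ∀ y, h y = 0 → 0 < H y := by
    intro y hy
    have hU0 : U' n y = -(φ y * U n y) := by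
      simp only [hhdef] at hy; linarith
    have h2φ : 0 < 2 * φ y + y := by
      rcases le_or_gt 0 y with hy0 | hy0
      · have := hφpos y; linarith
      · nlinarith [hφpos y, hφsq y]
    have hHeq : H y = (1/2 + y / (4 * φ y)) * U n y := by
      simp only [hHdef]
      rw [hU0]
      linear_combination (-(U n y)) * hφsq y
    rw [hHeq]
    apply mul_pos _ (hU.pos n y hn2)
    have hne : φ y ≠ 0 := ne_of_gt (hφpos y)
    have heq : 1/2 + y / (4 * φ y) = (2 * φ y + y) / (4 * φ y) := by
      field_simp
      ring
    rw [heq]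
    exact div_pos h2φ (by linarith [hφpos y])
  -- a point where h is negative
  set Y : ℝ := Real.sqrt ((n - 1/2) * (n + 3/2)) + 1 with hYdef
  have hYpos : 0 < Y := by positivity
  have hY2 : (n - 1/2) * (n + 3/2) < Y ^ 2 := by
    have h1 : Real.sqrt ((n - 1/2) * (n + 3/2)) ^ 2 = (n - 1/2) * (n + 3/2) :=
      Real.sq_sqrt (by nlinarith)
    nlinarith [Real.sqrt_nonneg ((n - 1/2) * (n + 3/2))]
  clear_value Y
  have hYneg : h Y < 0 := by
    have hd1 : U' n Y = -(Y / 2) * U n Y - (n + 1/2) * U (n + 1) Y := dform1 hU hn2 Y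
    have rec1 : U n Y = Y * U (n + 1) Y + (n + 3/2) * U (n + 2) Y := by
      have := hU.recurrence (n + 1) Y
      rw [show n + 1 - 1 = n by ring, show n + 1 + 1 = n + 2 by ring] at this
      rw [this]; ring
    have rec2 : U (n + 1) Y = Y * U (n + 2) Y + (n + 5/2) * U (n + 3) Y := by
      have := hU.recurrence (n + 2) Y
      rw [show n + 2 - 1 = n + 1 by ring, show n + 2 + 1 = n + 3 by ring] at this
      rw [this]; ring
    have P0 : 0 < U n Y := hU.pos n Y hn2
    have P1 : 0 < U (n + 1) Y := hU.pos (n + 1) Y (by linarith)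
    have P2 : 0 < U (n + 2) Y := hU.pos (n + 2) Y (by linarith)
    have P3 : 0 < U (n + 3) Y := hU.pos (n + 3) Y (by linarith)
    have hφY : Y / 2 ≤ φ Y := hφhalf Y (le_of_lt hYpos)
    have hfac : (φ Y - Y / 2) * (φ Y + Y / 2) = n - 1/2 := by
      linear_combination hφsq Y
    have hstep2 : (φ Y - Y / 2) * Y ≤ n - 1/2 := by
      nlinarith [hfac, hφY, hYpos]
    have e1 : h Y = (φ Y - Y / 2) * U n Y - (n + 1/2) * U (n + 1) Y := by
      simp only [hhdef]
      rw [hd1]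
      ring
    have e2 : (φ Y - Y / 2) * U n Y * Y ≤ (n - 1/2) * U n Y := by
      nlinarith [hstep2, P0]
    have e3 : (n - 1/2) * (n + 3/2) * U (n + 2) Y < Y * (Y * U (n + 2) Y) := by
      nlinarith [hY2, P2]
    have e4 : Y * (Y * U (n + 2) Y) ≤ Y * U (n + 1) Y := by
      have h4 : Y * U (n + 1) Y = Y * (Y * U (n + 2) Y) + (n + 5/2) * (Y * U (n + 3) Y) := by
        rw [rec2]; ring
      have h5 : 0 < (n + 5/2) * (Y * U (n + 3) Y) := mul_pos (by linarith) (mul_pos hYpos P3)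
      linarith [h4, h5]
    have rec1' : (n - 1/2) * U n Y
        = (n - 1/2) * (Y * U (n + 1) Y) + (n - 1/2) * (n + 3/2) * U (n + 2) Y := by
      rw [rec1]; ring
    have e5 : h Y * Y < 0 := by
      rw [e1]
      linarith [e2, e3, e4, rec1']
    by_contra hcon
    push_neg at hcon
    have : 0 ≤ h Y * Y := mul_nonneg hcon (le_of_lt hYpos)
    linarith
  -- h is negative at -x
  have hneg : h (-x) < 0 := by
    by_contra hcon
    push_neg at hcon
    have := barrier_pos hhd hcross (-x) Y (by linarith) hcon
    linarith
  -- translate to the ratio bound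
  have hd2 : U' n (-x) = -x / 2 * U n (-x) - U (n - 1) (-x) := by
    have := dform2 hU hn2 (-x)
    linear_combination this
  have hkey : (φ (-x) - x / 2) * U n (-x) < U (n - 1) (-x) := by
    simp only [hhdef] at hneg
    rw [hd2] at hneg
    linarith [hneg]
  set s : ℝ := Real.sqrt (4 * n - 2 + x ^ 2) with hsdef
  have hs0 : 0 ≤ s := Real.sqrt_nonneg _
  have hssq : s ^ 2 = 4 * n - 2 + x ^ 2 := Real.sq_sqrt (by nlinarith)
  have hφs : 2 * φ (-x) = s := by
    rw [hsdef, show 4 * n - 2 + x ^ 2 = (2 * φ (-x)) ^ 2 by linear_combination (-4 : ℝ) * hφsq (-x)]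
    rw [Real.sqrt_sq (by linarith [hφpos (-x)])]
  have hsx : x < s := by nlinarith [hssq, hs0, hx]
  have hP : 0 < U n (-x) := hU.pos n (-x) hn2
  have hQ : 0 < U (n - 1) (-x) := hU.pos (n - 1) (-x) (by linarith)
  rw [div_lt_div_iff₀ hQ (by linarith : (0:ℝ) < 2 * n - 1)]
  have hkey2 : (s - x) / 2 * U n (-x) < U (n - 1) (-x) := by
    have : φ (-x) - x / 2 = (s - x) / 2 := by linarith [hφs]
    rwa [this] at hkey
  nlinarith [mul_lt_mul_of_pos_left hkey2 (show (0:ℝ) < x + s by linarith), hssq, hP]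

end PCFAux

/-- For `n > 3/2` and `x ≥ 0`,
`(x + √(4n-6+x²))/(2n-1) < U(n,-x)/U(n-1,-x) < (x + √(4n-2+x²))/(2n-1)`;
the upper bound also holds for `n ∈ (1/2, 3/2)`. -/
theorem pcf_neg_arg_ratio_bounds (U U' : ℝ → ℝ → ℝ)
    (hU : IsParabolicCylinderU U U') :
    (∀ n x : ℝ, 3/2 < n → 0 ≤ x →
      (x + Real.sqrt (4 * n - 6 + x ^ 2)) / (2 * n - 1) < U n (-x) / U (n - 1) (-x) ∧
      U n (-x) / U (n - 1) (-x) < (x + Real.sqrt (4 * n - 2 + x ^ 2)) / (2 * n - 1)) ∧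
    (∀ n x : ℝ, 1/2 < n → n < 3/2 → 0 ≤ x →
      U n (-x) / U (n - 1) (-x) < (x + Real.sqrt (4 * n - 2 + x ^ 2)) / (2 * n - 1)) := by
  constructor
  · intro n x hn hx
    have hn2 : (1:ℝ)/2 < n := by linarith
    refine ⟨?_, PCFAux.upper hU hn2 x hx⟩
    -- lower bound
    have hm : (1:ℝ)/2 < n - 1 := by linarith
    have hub := PCFAux.upper hU hm x hx
    rw [show n - 1 - 1 = n - 2 by ring, show 4 * (n - 1) - 2 + x ^ 2 = 4 * n - 6 + x ^ 2 by ring,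
      show 2 * (n - 1) - 1 = 2 * n - 3 by ring] at hub
    set t : ℝ := Real.sqrt (4 * n - 6 + x ^ 2) with htdef
    have ht0 : 0 ≤ t := Real.sqrt_nonneg _
    have htsq : t ^ 2 = 4 * n - 6 + x ^ 2 := Real.sq_sqrt (by nlinarith)
    have hP : 0 < U n (-x) := hU.pos n (-x) (by linarith)
    have hQ : 0 < U (n - 1) (-x) := hU.pos (n - 1) (-x) (by linarith)
    have hS : 0 < U (n - 2) (-x) := hU.pos (n - 2) (-x) (by linarith)
    have hrec : U (n - 2) (-x) = -x * U (n - 1) (-x) + (n - 1/2) * U n (-x) := by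
      have h := hU.recurrence (n - 1) (-x)
      rw [show n - 1 - 1 = n - 2 by ring, show n - 1 + 1 = n by ring] at h
      rw [h]; ring
    have htx : x < t := by nlinarith [htsq, ht0, hx]
    have hub' : U (n - 1) (-x) * (2 * n - 3) < (x + t) * U (n - 2) (-x) :=
      (div_lt_div_iff₀ hS (by linarith : (0:ℝ) < 2 * n - 3)).mp hub
    rw [div_lt_div_iff₀ (by linarith : (0:ℝ) < 2 * n - 1) hQ]
    have hLHS : (t - x) * U (n - 1) (-x) * (t + x) = (4 * n - 6) * U (n - 1) (-x) := by
      linear_combination (U (n - 1) (-x)) * htsq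
    have key : (t - x) * U (n - 1) (-x) * (t + x) < 2 * U (n - 2) (-x) * (t + x) := by
      rw [hLHS]
      nlinarith [hub']
    have hcancel : (t - x) * U (n - 1) (-x) < 2 * U (n - 2) (-x) :=
      lt_of_mul_lt_mul_right key (by linarith : (0:ℝ) ≤ t + x)
    nlinarith [hcancel, hrec]
  · intro n x hn1 _ hx
    exact PCFAux.upper hU hn1 x hx
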